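/- Let Γ ⊆ ℂ be nonempty and assume that for every complex Banach space X, every bounded linear operator T on X and every x ∈ X, if Orb(Γx,T) is somewhere dense in X then x is hypercyclic for T. Then closure(Γ𝕋) \ {0} is bounded, bounded away from 0, and has empty interior in ℂ. -/

import Mathlib

open Metric Set

noncomputable section SHS

private lemma shs_exists_int_mul (A B : ℝ) (h : A + 2*Real.pi ≤ B) :
    ∃ m : ℤ, A ≤ 2*Real.pi*m ∧ 2*Real.pi*m ≤ B := by
  refine ⟨⌈A/(2*Real.pi)⌉, ?_, ?_⟩
  · have h1 := Int.le_ceil (A/(2*Real.pi))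
    have := mul_le_mul_of_nonneg_left h1 (le_of_lt (by positivity : (0:ℝ) < 2*Real.pi))
    rwa [mul_div_cancel₀ _ (ne_of_gt (by positivity : (0:ℝ) < 2*Real.pi))] at this
  · have h2 := Int.ceil_lt_add_one (A/(2*Real.pi))
    have := mul_lt_mul_of_pos_left h2 (by positivity : (0:ℝ) < 2*Real.pi)
    rw [mul_add, mul_div_cancel₀ _ (ne_of_gt (by positivity : (0:ℝ) < 2*Real.pi)), mul_one] at this
    linarith

private lemma shs_exp_form {γ : ℂ} (h : γ ≠ 0) :
    γ = Complex.exp (↑(Real.log ‖γ‖) + ↑(Complex.arg γ) * Complex.I) := by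
  have h2 : Complex.exp (↑(Real.log ‖γ‖) + ↑(Complex.arg γ) * Complex.I)
      = ↑‖γ‖ * Complex.exp (↑(Complex.arg γ) * Complex.I) := by
    rw [Complex.exp_add, ← Complex.ofReal_exp,
      Real.exp_log (norm_pos_iff.mpr h)]
  rw [h2, Complex.norm_mul_exp_arg_mul_I]

private lemma shs_exp_shift (a b : ℝ) (m : ℤ) :
    Complex.exp (↑a + ↑(b - 2*Real.pi*m) * Complex.I) = Complex.exp (↑a + ↑b * Complex.I) := by
  have h1 : (↑a + ↑b * Complex.I : ℂ) =
      (↑a + ↑(b - 2*Real.pi*m) * Complex.I) + ↑m * (2 * ↑Real.pi * Complex.I) := by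
    push_cast; ring
  conv_rhs => rw [h1, Complex.exp_add]
  rw [Complex.exp_int_mul_two_pi_mul_I, mul_one]

private lemma shs_exp_shift' (b : ℝ) (m : ℤ) :
    Complex.exp (↑(b - 2*Real.pi*m) * Complex.I) = Complex.exp (↑b * Complex.I) := by
  have := shs_exp_shift 0 b m
  simpa using this

private lemma shs_G_cont : Continuous (fun q : ℝ × ℝ => Complex.exp (↑q.1 + ↑q.2 * Complex.I)) := by
  fun_prop

private lemma shs_notdense_le_one {l : ℂ} (h : ‖l‖ ≤ 1) :
    ¬ Dense {y : ℂ | ∃ n : ℕ, y = l ^ n} := by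
  intro hd
  obtain ⟨y, hy⟩ := Metric.dense_iff.mp hd 3 1 one_pos
  obtain ⟨n, rfl⟩ := hy.2
  have h1 : ‖l ^ n‖ ≤ 1 := by
    rw [norm_pow]; exact pow_le_one₀ (norm_nonneg _) h
  have h2 : dist (l ^ n) (3:ℂ) < 1 := mem_ball.mp hy.1
  have h3 : ‖(3:ℂ)‖ = 3 := by norm_num
  have h4 : ‖(3:ℂ)‖ - ‖l ^ n‖ ≤ ‖(3:ℂ) - l ^ n‖ := norm_sub_norm_le _ _
  rw [dist_eq_norm, ← norm_neg] at h2
  simp only [neg_sub] at h2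
  linarith

private lemma shs_notdense_one_le {l : ℂ} (h : 1 ≤ ‖l‖) :
    ¬ Dense {y : ℂ | ∃ n : ℕ, y = l ^ n} := by
  intro hd
  obtain ⟨y, hy⟩ := Metric.dense_iff.mp hd 0 1 one_pos
  obtain ⟨n, rfl⟩ := hy.2
  have h1 : (1:ℝ) ≤ ‖l ^ n‖ := by
    rw [norm_pow]; exact one_le_pow₀ h
  have h2 : dist (l ^ n) (0:ℂ) < 1 := mem_ball.mp hy.1
  rw [dist_zero_right] at h2
  linarith

set_option maxHeartbeats 1000000 in
private lemma shs_construct_ab (Γ : Set ℂ) (σ : ℝ) (hσ : σ = 1 ∨ σ = -1)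
    (hdiv : ∀ R : ℝ, ∃ γ ∈ Γ, γ ≠ 0 ∧ R < σ * Real.log ‖γ‖) :
    ∃ l : ℂ, Dense {y : ℂ | ∃ γ ∈ Γ, ∃ n : ℕ, y = γ * l ^ n} ∧
      ¬ Dense {y : ℂ | ∃ n : ℕ, y = l ^ n} := by
  have hσ2 : σ * σ = 1 := by rcases hσ with h | h <;> rw [h] <;> norm_num
  set U : ℚ × ℚ × {q : ℚ // 0 < q} → Set (ℝ × ℝ) := fun i =>
    {p : ℝ × ℝ | ∃ γ ∈ Γ, γ ≠ 0 ∧ ∃ n : ℕ, 1 ≤ n ∧ ∃ m : ℤ,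
      |Real.log ‖γ‖ - σ * (↑n * Real.exp p.1) - ↑i.1| < ↑(i.2.2 : ℚ) ∧
      |Complex.arg γ + 2*Real.pi*(↑n*p.2) - (↑i.2.1 + 2*Real.pi*↑m)| < ↑(i.2.2 : ℚ)}
    with hU
  have hUopen : ∀ i, IsOpen (U i) := by
    rintro ⟨t, θ, ε⟩
    have he : U (t, θ, ε)
        = ⋃ γ ∈ Γ, ⋃ (_ : γ ≠ 0), ⋃ n : ℕ, ⋃ (_ : 1 ≤ n), ⋃ m : ℤ,
          {p : ℝ × ℝ | |Real.log ‖γ‖ - σ * (↑n * Real.exp p.1) - ↑t| < ↑(ε:ℚ) ∧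
            |Complex.arg γ + 2*Real.pi*(↑n*p.2) - (↑θ + 2*Real.pi*↑m)| < ↑(ε:ℚ)} := by
      ext q
      simp only [hU, mem_setOf_eq, mem_iUnion, exists_prop]
    rw [he]
    refine isOpen_biUnion fun γ _ => isOpen_iUnion fun _ => isOpen_iUnion fun n =>
      isOpen_iUnion fun _ => isOpen_iUnion fun m => ?_
    rw [setOf_and]
    exact (isOpen_lt (by fun_prop) continuous_const).inter
      (isOpen_lt (by fun_prop) continuous_const)
  have hUdense : ∀ i, Dense (U i) := by
    rintro ⟨t, θ, ε, hε⟩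
    rw [Metric.dense_iff]
    intro p0 r hr
    set s0 := p0.1 with hs0
    set α0 := p0.2 with hα0
    set r' := r/2 with hr'
    have hr'pos : 0 < r' := by positivity
    set c1 := Real.exp (s0 - r') with hc1d
    set c2 := Real.exp (s0 + r') with hc2d
    have hc1 : 0 < c1 := Real.exp_pos _
    have hc2 : 0 < c2 := Real.exp_pos _
    have hc12 : c1 < c2 := Real.exp_lt_exp.mpr (by linarith)
    obtain ⟨N, hN⟩ := exists_nat_gt (1/(2*r'))
    obtain ⟨γ, hγΓ, hγ0, hγL⟩ := hdiv (σ * ↑t + max (((N:ℝ)+1)*c2) (c1*c2/(c2-c1)) + 1)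
    set L := Real.log ‖γ‖ with hLd
    set D := σ * L - σ * (t:ℝ) with hDd
    have hD1 : ((N:ℝ)+1)*c2 < D := by
      have h := le_max_left (((N:ℝ)+1)*c2) (c1*c2/(c2-c1))
      rw [hDd]; linarith
    have hD2 : c1*c2/(c2-c1) < D := by
      have h := le_max_right (((N:ℝ)+1)*c2) (c1*c2/(c2-c1))
      rw [hDd]; linarith
    have hDpos : 0 < D := lt_trans (by positivity) hD1
    set q := D/c2 with hq
    have hqpos : 0 < q := div_pos hDpos hc2
    have hDq : D = q * c2 := (div_mul_cancel₀ D (ne_of_gt hc2)).symm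
    set n := ⌊q⌋₊ + 1 with hn
    have hn1 : q < (n:ℝ) := by
      rw [hn]; push_cast; exact Nat.lt_floor_add_one q
    have hn2 : (n:ℝ) ≤ q + 1 := by
      rw [hn]; push_cast
      have := Nat.floor_le (le_of_lt hqpos)
      linarith
    have hNq : (N:ℝ) + 1 < q := by
      rw [hq, lt_div_iff₀ hc2]; linarith
    have hnN : (1:ℝ)/(2*r') < (n:ℝ) := by linarith
    have hnr' : 1 < (n:ℝ) * (2*r') := by
      rw [div_lt_iff₀ (by positivity)] at hnN
      linarith
    have hnpos : (0:ℝ) < (n:ℝ) := by linarith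
    have hnne : (n:ℝ) ≠ 0 := ne_of_gt hnpos
    have hc1n : (n:ℝ) * c1 < D := by
      have h1' : c1*c2 < D*(c2-c1) := (div_lt_iff₀ (by linarith)).mp hD2
      have key : c1 < q * (c2 - c1) := by
        by_contra hk
        push_neg at hk
        have h3 := mul_le_mul_of_nonneg_right hk hc2.le
        rw [hDq] at h1'
        nlinarith
      have h4 := mul_le_mul_of_nonneg_right hn2 hc1.le
      rw [hDq]
      nlinarith
    have hc2n : D < (n:ℝ) * c2 := by
      rw [hDq]
      exact mul_lt_mul_of_pos_right hn1 hc2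
    set cc := D / (n:ℝ) with hcc
    have hccpos : 0 < cc := div_pos hDpos hnpos
    have hcc1 : c1 < cc := by rw [hcc, lt_div_iff₀ hnpos]; linarith
    have hcc2 : cc < c2 := by rw [hcc, div_lt_iff₀ hnpos]; linarith
    set s := Real.log cc with hs
    have hes : Real.exp s = cc := Real.exp_log hccpos
    have hs1 : s0 - r' < s := by
      have h := Real.log_lt_log hc1 hcc1
      rwa [hc1d, Real.log_exp] at h
    have hs2 : s < s0 + r' := by
      have h := Real.log_lt_log hccpos hcc2
      rwa [hc2d, Real.log_exp] at h
    have h2πn : (0:ℝ) < 2*Real.pi*(n:ℝ) := by positivity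
    obtain ⟨m, hm1, hm2⟩ := shs_exists_int_mul
        (Complex.arg γ - ↑θ + 2*Real.pi*((n:ℝ)*(α0 - r')))
        (Complex.arg γ - ↑θ + 2*Real.pi*((n:ℝ)*(α0 + r'))) (by
          have he : 2*Real.pi*((n:ℝ)*(α0+r')) - 2*Real.pi*((n:ℝ)*(α0-r'))
              = 2*Real.pi*((n:ℝ)*(2*r')) := by ring
          have h5 := mul_lt_mul_of_pos_left hnr' (by positivity : (0:ℝ) < 2*Real.pi)
          linarith)
    set α := ((θ:ℝ) + 2*Real.pi*↑m - Complex.arg γ) / (2*Real.pi*(n:ℝ)) with hα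
    have hα1 : α0 - r' ≤ α := by
      rw [hα, le_div_iff₀ h2πn]; nlinarith
    have hα2 : α ≤ α0 + r' := by
      rw [hα, div_le_iff₀ h2πn]; nlinarith
    refine ⟨(s, α), ?_, ?_⟩
    · rw [mem_ball, Prod.dist_eq]
      simp only [sup_lt_iff]
      constructor
      · rw [Real.dist_eq, abs_sub_lt_iff]
        constructor <;> [linarith; linarith]
      · rw [Real.dist_eq, abs_sub_lt_iff]
        constructor <;> [linarith; linarith]
    · refine ⟨γ, hγΓ, hγ0, n, Nat.le_add_left 1 _, m, ?_, ?_⟩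
      · show |L - σ * ((n:ℝ) * Real.exp s) - (t:ℝ)| < (ε:ℝ)
        have hnc : (n:ℝ) * cc = D := by
          rw [hcc, mul_div_cancel₀ _ hnne]
        have hσD : σ * D = L - (t:ℝ) := by
          rw [hDd]; linear_combination (L - (t:ℝ)) * hσ2
        rw [hes, show L - σ * ((n:ℝ) * cc) - (t:ℝ) = 0 from by rw [hnc, hσD]; ring]
        rw [abs_zero]
        exact_mod_cast hε
      · show |Complex.arg γ + 2*Real.pi*((n:ℝ)*α) - ((θ:ℝ) + 2*Real.pi*↑m)| < (ε:ℝ)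
        have h0 : 2*Real.pi*((n:ℝ)*α) = (θ:ℝ) + 2*Real.pi*↑m - Complex.arg γ := by
          rw [hα]
          field_simp
        rw [show Complex.arg γ + 2*Real.pi*((n:ℝ)*α) - ((θ:ℝ) + 2*Real.pi*↑m) = 0 from by
          rw [h0]; ring]
        rw [abs_zero]
        exact_mod_cast hε
  have hB : Dense (⋂ i, U i) := dense_iInter_of_isOpen hUopen hUdense
  obtain ⟨p, hp⟩ := hB.nonempty
  have hpU : ∀ (t θ ε : ℚ), 0 < ε → ∃ γ ∈ Γ, γ ≠ 0 ∧ ∃ n : ℕ, 1 ≤ n ∧ ∃ m : ℤ,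
      |Real.log ‖γ‖ - σ * (↑n * Real.exp p.1) - ↑t| < ↑ε ∧
      |Complex.arg γ + 2*Real.pi*(↑n*p.2) - (↑θ + 2*Real.pi*↑m)| < ↑ε := by
    intro t θ ε hε
    exact mem_iInter.mp hp (t, θ, ⟨ε, hε⟩)
  set c := Real.exp p.1 with hc
  have hcpos : 0 < c := Real.exp_pos _
  set l := Complex.exp (↑(-(σ * c)) + ↑(2*Real.pi*p.2) * Complex.I) with hl
  have hnorml : ‖l‖ = Real.exp (-(σ * c)) := by
    rw [hl, Complex.norm_exp]
    norm_num
  have horb : ∀ γ : ℂ, γ ≠ 0 → ∀ n : ℕ, γ * l ^ n =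
      Complex.exp (↑(Real.log ‖γ‖ - σ * (↑n * c)) +
        ↑(Complex.arg γ + 2*Real.pi*(↑n*p.2)) * Complex.I) := by
    intro γ hγ n
    conv_lhs => rw [shs_exp_form hγ, hl, ← Complex.exp_nat_mul, ← Complex.exp_add]
    congr 1
    push_cast
    ring
  refine ⟨l, ?_, ?_⟩
  · have hsub : {(0:ℂ)}ᶜ ⊆ closure {y : ℂ | ∃ γ ∈ Γ, ∃ n : ℕ, y = γ * l ^ n} := by
      intro w hw
      have hw0 : w ≠ 0 := hw
      rw [Metric.mem_closure_iff]
      intro ε0 hε0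
      have hca := shs_G_cont.continuousAt (x := ((Real.log ‖w‖, Complex.arg w) : ℝ × ℝ))
      rw [Metric.continuousAt_iff] at hca
      obtain ⟨δ, hδ, hcc⟩ := hca ε0 hε0
      have hcc' : ∀ A B : ℝ, |A - Real.log ‖w‖| < δ → |B - Complex.arg w| < δ →
          dist (Complex.exp (↑A + ↑B * Complex.I))
            (Complex.exp (↑(Real.log ‖w‖) + ↑(Complex.arg w) * Complex.I)) < ε0 := by
        intro A B h1 h2
        have hd : dist ((A, B) : ℝ × ℝ) ((Real.log ‖w‖, Complex.arg w) : ℝ × ℝ) < δ := by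
          rw [Prod.dist_eq]
          simp only [sup_lt_iff]
          exact ⟨by rwa [Real.dist_eq], by rwa [Real.dist_eq]⟩
        have h := hcc hd
        dsimp only at h
        exact h
      obtain ⟨t, ht⟩ := exists_rat_near (Real.log ‖w‖) (by positivity : (0:ℝ) < δ/3)
      obtain ⟨th, hth⟩ := exists_rat_near (Complex.arg w) (by positivity : (0:ℝ) < δ/3)
      obtain ⟨εq, hεq1, hεq2⟩ := exists_rat_btwn (by positivity : (0:ℝ) < δ/3)
      have hεqpos : (0:ℚ) < εq := by exact_mod_cast hεq1
      obtain ⟨γ, hγΓ, hγ0, n, hn1, m, hmod, hang⟩ := hpU t th εq hεqpos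
      refine ⟨γ * l ^ n, ⟨γ, hγΓ, n, rfl⟩, ?_⟩
      have he1 : γ * l ^ n = Complex.exp (↑(Real.log ‖γ‖ - σ * (↑n * c)) +
          ↑((Complex.arg γ + 2*Real.pi*(↑n*p.2)) - 2*Real.pi*m) * Complex.I) := by
        rw [horb γ hγ0 n, ← shs_exp_shift (Real.log ‖γ‖ - σ * (↑n * c))
          (Complex.arg γ + 2*Real.pi*(↑n*p.2)) m]
      have h9 := hcc' (Real.log ‖γ‖ - σ * (↑n * c))
          ((Complex.arg γ + 2*Real.pi*(↑n*p.2)) - 2*Real.pi*m) (by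
            rw [show Real.log ‖γ‖ - σ * (↑n * c) - Real.log ‖w‖
                = (Real.log ‖γ‖ - σ * (↑n * c) - ↑t) + (↑t - Real.log ‖w‖) from by ring]
            refine lt_of_le_of_lt (abs_add_le _ _) ?_
            rw [abs_sub_comm (t:ℝ)]
            linarith [hmod, hεq2, ht]) (by
            rw [show Complex.arg γ + 2*Real.pi*(↑n*p.2) - 2*Real.pi*(m:ℝ) - Complex.arg w
                = ((Complex.arg γ + 2*Real.pi*(↑n*p.2)) - ((th:ℝ) + 2*Real.pi*m))
                  + ((th:ℝ) - Complex.arg w) from by ring]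
            refine lt_of_le_of_lt (abs_add_le _ _) ?_
            rw [abs_sub_comm (th:ℝ)]
            linarith [hang, hεq2, hth])
      rw [← shs_exp_form hw0] at h9
      rw [he1, dist_comm]
      exact h9
    have h8 : Dense {(0:ℂ)}ᶜ := dense_compl_singleton 0
    rw [dense_iff_closure_eq]
    apply univ_subset_iff.mp
    calc (univ : Set ℂ) = closure {(0:ℂ)}ᶜ := h8.closure_eq.symm
      _ ⊆ closure (closure {y : ℂ | ∃ γ ∈ Γ, ∃ n : ℕ, y = γ * l ^ n}) := closure_mono hsub
      _ = closure {y : ℂ | ∃ γ ∈ Γ, ∃ n : ℕ, y = γ * l ^ n} := closure_closure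
  · rcases hσ with h | h
    · apply shs_notdense_le_one
      rw [hnorml, h, one_mul]
      exact Real.exp_le_one_iff.mpr (by linarith)
    · apply shs_notdense_one_le
      rw [hnorml, h]
      rw [Real.one_le_exp_iff]
      linarith

set_option maxHeartbeats 1000000 in
private lemma shs_construct_c (Γ : Set ℂ) (w0 : ℂ) (δ : ℝ) (hδ : 0 < δ)
    (hball : ball w0 (2*δ) ⊆ closure {w : ℂ | ∃ γ ∈ Γ, ∃ z : ℂ, ‖z‖ = 1 ∧ w = γ * z})
    (h0 : (0:ℂ) ∉ ball w0 (2*δ)) :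
    ∃ l : ℂ, (interior (closure {y : ℂ | ∃ γ ∈ Γ, ∃ n : ℕ, y = γ * l ^ n})).Nonempty ∧
      ¬ Dense {y : ℂ | ∃ n : ℕ, y = l ^ n} := by
  set U : ℚ × {q : ℚ // 0 < q} → Set ℝ := fun i =>
    {α : ℝ | ∃ n : ℕ, 1 ≤ n ∧ ∃ m : ℤ,
      |2*Real.pi*(↑n*α) - (↑i.1 + 2*Real.pi*↑m)| < ↑(i.2 : ℚ)} with hUd
  have hUopen : ∀ i, IsOpen (U i) := by
    rintro ⟨θ, ε⟩
    have he : U (θ, ε) = ⋃ n : ℕ, ⋃ (_ : 1 ≤ n), ⋃ m : ℤ,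
        {α : ℝ | |2*Real.pi*(↑n*α) - (↑θ + 2*Real.pi*↑m)| < ↑(ε:ℚ)} := by
      ext α
      simp only [hUd, mem_setOf_eq, mem_iUnion, exists_prop]
    rw [he]
    exact isOpen_iUnion fun n => isOpen_iUnion fun _ => isOpen_iUnion fun m =>
      isOpen_lt (by fun_prop) continuous_const
  have hUdense : ∀ i, Dense (U i) := by
    rintro ⟨θ, ε, hε⟩
    rw [Metric.dense_iff]
    intro α0 r hr
    set r' := r/2 with hr'
    have hr'pos : 0 < r' := by positivity
    obtain ⟨N, hN⟩ := exists_nat_gt (1/(2*r'))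
    set n := N + 1 with hn
    have hnN : (1:ℝ)/(2*r') < (n:ℝ) := by
      rw [hn]; push_cast; linarith
    have hnpos : (0:ℝ) < (n:ℝ) := by
      rw [hn]; push_cast; positivity
    have hnr' : 1 < (n:ℝ) * (2*r') := by
      rw [div_lt_iff₀ (by positivity)] at hnN
      linarith
    have h2πn : (0:ℝ) < 2*Real.pi*(n:ℝ) := by positivity
    obtain ⟨m, hm1, hm2⟩ := shs_exists_int_mul
        (- ↑θ + 2*Real.pi*((n:ℝ)*(α0 - r'))) (- ↑θ + 2*Real.pi*((n:ℝ)*(α0 + r'))) (by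
          have he2 : 2*Real.pi*((n:ℝ)*(α0+r')) - 2*Real.pi*((n:ℝ)*(α0-r'))
              = 2*Real.pi*((n:ℝ)*(2*r')) := by ring
          have h5 := mul_lt_mul_of_pos_left hnr' (by positivity : (0:ℝ) < 2*Real.pi)
          linarith)
    set α := ((θ:ℝ) + 2*Real.pi*↑m) / (2*Real.pi*(n:ℝ)) with hα
    have hα1 : α0 - r' ≤ α := by
      rw [hα, le_div_iff₀ h2πn]; nlinarith
    have hα2 : α ≤ α0 + r' := by
      rw [hα, div_le_iff₀ h2πn]; nlinarith
    refine ⟨α, ?_, n, by omega, m, ?_⟩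
    · rw [mem_ball, Real.dist_eq, abs_sub_lt_iff]
      constructor <;> [linarith; linarith]
    · show |2*Real.pi*((n:ℝ)*α) - ((θ:ℝ) + 2*Real.pi*↑m)| < (ε:ℝ)
      have h6 : 2*Real.pi*((n:ℝ)*α) = (θ:ℝ) + 2*Real.pi*↑m := by
        rw [hα]; field_simp
      rw [h6, sub_self, abs_zero]
      exact_mod_cast hε
  obtain ⟨α, hα⟩ := (dense_iInter_of_isOpen hUopen hUdense).nonempty
  have hαU : ∀ (θ ε : ℚ), 0 < ε → ∃ n : ℕ, 1 ≤ n ∧ ∃ m : ℤ,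
      |2*Real.pi*(↑n*α) - (↑θ + 2*Real.pi*↑m)| < ↑ε :=
    fun θ ε hε => mem_iInter.mp hα (θ, ⟨ε, hε⟩)
  set l := Complex.exp (↑(2*Real.pi*α) * Complex.I) with hl
  have hnorml : ‖l‖ = 1 := by
    rw [hl, Complex.norm_exp]
    simp
  have hpow : ∀ n : ℕ, l ^ n = Complex.exp (↑(2*Real.pi*(↑n*α)) * Complex.I) := by
    intro n
    rw [hl, ← Complex.exp_nat_mul]
    congr 1
    push_cast
    ring
  have hG2 : Continuous (fun θ' : ℝ => Complex.exp (↑θ' * Complex.I)) := by fun_prop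
  have hcircle : ∀ z : ℂ, ‖z‖ = 1 → ∀ ε : ℝ, 0 < ε → ∃ n : ℕ, ‖l ^ n - z‖ < ε := by
    intro z hz ε hε
    have hca := hG2.continuousAt (x := Complex.arg z)
    rw [Metric.continuousAt_iff] at hca
    obtain ⟨δ', hδ', hcc⟩ := hca ε hε
    have hcc' : ∀ B : ℝ, |B - Complex.arg z| < δ' →
        dist (Complex.exp (↑B * Complex.I))
          (Complex.exp (↑(Complex.arg z) * Complex.I)) < ε := by
      intro B h1
      exact hcc (by rwa [Real.dist_eq] : dist B (Complex.arg z) < δ')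
    obtain ⟨θq, hθq⟩ := exists_rat_near (Complex.arg z) (by positivity : (0:ℝ) < δ'/3)
    obtain ⟨εq, hεq1, hεq2⟩ := exists_rat_btwn (by positivity : (0:ℝ) < δ'/3)
    have hεqpos : (0:ℚ) < εq := by exact_mod_cast hεq1
    obtain ⟨n, hn1, m, hang⟩ := hαU θq εq hεqpos
    refine ⟨n, ?_⟩
    have he2 : l ^ n = Complex.exp (↑(2*Real.pi*(↑n*α) - 2*Real.pi*m) * Complex.I) := by
      rw [hpow n, shs_exp_shift']
    have h9 := hcc' (2*Real.pi*(↑n*α) - 2*Real.pi*m) (by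
      rw [show 2*Real.pi*(↑n*α) - 2*Real.pi*(m:ℝ) - Complex.arg z
          = (2*Real.pi*(↑n*α) - ((θq:ℝ) + 2*Real.pi*m)) + ((θq:ℝ) - Complex.arg z) from by ring]
      refine lt_of_le_of_lt (abs_add_le _ _) ?_
      rw [abs_sub_comm (θq:ℝ)]
      linarith [hang, hεq2, hθq])
    have hze : Complex.exp (↑(Complex.arg z) * Complex.I) = z := by
      have h10 := Complex.norm_mul_exp_arg_mul_I z
      rw [show ‖z‖ = 1 from hz] at h10
      simpa using h10
    rw [hze] at h9
    rw [he2, ← dist_eq_norm]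
    exact h9
  refine ⟨l, ?_, shs_notdense_one_le (le_of_eq hnorml.symm)⟩
  have hsub2 : ball w0 δ ⊆ closure {y : ℂ | ∃ γ ∈ Γ, ∃ n : ℕ, y = γ * l ^ n} := by
    intro w hw
    rw [Metric.mem_closure_iff]
    intro ε hε
    have hwball : w ∈ ball w0 (2*δ) := by
      rw [mem_ball] at hw ⊢
      linarith
    have hw0 : w ≠ 0 := by
      intro h
      exact h0 (h ▸ hwball)
    have hwpos : 0 < ‖w‖ := norm_pos_iff.mpr hw0
    have hε1pos : 0 < min (ε/2) (‖w‖/2) := lt_min (by positivity) (by positivity)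
    obtain ⟨u, hu, hud⟩ := Metric.mem_closure_iff.mp (hball hwball) _ hε1pos
    obtain ⟨γ, hγΓ, z, hz1, rfl⟩ := hu
    have hγnorm : ‖γ * z‖ = ‖γ‖ := by rw [norm_mul, hz1, mul_one]
    rw [dist_eq_norm] at hud
    have h10 : ‖w‖ - ‖γ * z‖ ≤ ‖w - γ * z‖ := norm_sub_norm_le _ _
    have hγpos : 0 < ‖γ‖ := by
      have h11 : min (ε/2) (‖w‖/2) ≤ ‖w‖/2 := min_le_right _ _
      rw [hγnorm] at h10
      linarith
    obtain ⟨n, hn⟩ := hcircle z hz1 ((ε/2)/‖γ‖) (by positivity)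
    refine ⟨γ * l ^ n, ⟨γ, hγΓ, n, rfl⟩, ?_⟩
    have h12 : dist w (γ * l ^ n) ≤ dist w (γ * z) + dist (γ * z) (γ * l ^ n) :=
      dist_triangle _ _ _
    have h13 : dist (γ * z) (γ * l ^ n) = ‖γ‖ * ‖l ^ n - z‖ := by
      rw [dist_eq_norm, ← mul_sub, norm_mul, norm_sub_rev]
    have h14 : ‖γ‖ * ‖l ^ n - z‖ < ‖γ‖ * ((ε/2)/‖γ‖) := by
      exact mul_lt_mul_of_pos_left hn hγpos
    rw [mul_div_cancel₀ _ (ne_of_gt hγpos)] at h14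
    have h15 : min (ε/2) (‖w‖/2) ≤ ε/2 := min_le_left _ _
    simp only [dist_eq_norm] at h12 h13 ⊢
    linarith [h12, h13, h14, hud]
  exact ⟨w0, interior_maximal hsub2 isOpen_ball (mem_ball_self hδ)⟩


/-- **Proposition 4.2.** Suppose the nonempty set `Γ ⊆ ℂ` is such that for every complex
Banach space `X`, every `T ∈ L(X)` and every `x ∈ X`, whenever `Orb(Γx,T)` is somewhere
dense in `X`, `x` is hypercyclic for `T`. Then `closure(Γ𝕋) \ {0}` is bounded, bounded away
from `0` and has empty interior. -/
theorem somewhere_hypercyclic_scalar_set_necessity (Γ : Set ℂ) (hΓ : Γ.Nonempty)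
    (H : ∀ (X : Type) [NormedAddCommGroup X] [NormedSpace ℂ X] [CompleteSpace X],
      ∀ (T : X →L[ℂ] X) (x : X),
        (interior (closure {y : X | ∃ γ ∈ Γ, ∃ n : ℕ, y = γ • (T ^ n) x})).Nonempty →
        Dense {y : X | ∃ n : ℕ, y = (T ^ n) x}) :
    Bornology.IsBounded (closure {w : ℂ | ∃ γ ∈ Γ, ∃ z : ℂ, ‖z‖ = 1 ∧ w = γ * z} \ {0}) ∧
    (∃ a : ℝ, 0 < a ∧
      ∀ w ∈ closure {w : ℂ | ∃ γ ∈ Γ, ∃ z : ℂ, ‖z‖ = 1 ∧ w = γ * z} \ {0}, a ≤ ‖w‖) ∧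
    interior (closure {w : ℂ | ∃ γ ∈ Γ, ∃ z : ℂ, ‖z‖ = 1 ∧ w = γ * z} \ {0}) = ∅ := by
  have key : ∀ l : ℂ,
      (interior (closure {y : ℂ | ∃ γ ∈ Γ, ∃ n : ℕ, y = γ * l ^ n})).Nonempty →
      Dense {y : ℂ | ∃ n : ℕ, y = l ^ n} := by
    intro l hl
    have hT : ∀ n : ℕ, (((ContinuousLinearMap.mul ℂ ℂ) l ^ n) (1:ℂ)) = l ^ n := by
      intro n
      induction n with
      | zero => simp
      | succ k ih =>
        rw [pow_succ', ContinuousLinearMap.mul_apply, ih, ContinuousLinearMap.mul_apply',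
          ← pow_succ']
    have h1 := H ℂ ((ContinuousLinearMap.mul ℂ ℂ) l) 1
    have hset1 : {y : ℂ | ∃ γ ∈ Γ, ∃ n : ℕ, y = γ • (((ContinuousLinearMap.mul ℂ ℂ) l ^ n) (1:ℂ))}
        = {y : ℂ | ∃ γ ∈ Γ, ∃ n : ℕ, y = γ * l ^ n} := by
      ext y
      simp only [mem_setOf_eq, hT, smul_eq_mul]
    have hset2 : {y : ℂ | ∃ n : ℕ, y = (((ContinuousLinearMap.mul ℂ ℂ) l ^ n) (1:ℂ))}
        = {y : ℂ | ∃ n : ℕ, y = l ^ n} := by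
      ext y
      simp only [mem_setOf_eq, hT]
    rw [hset1, hset2] at h1
    exact h1 hl
  refine ⟨?_, ?_, ?_⟩
  · by_contra hb
    rw [isBounded_iff_forall_norm_le] at hb
    push_neg at hb
    have hdiv : ∀ R : ℝ, ∃ γ ∈ Γ, γ ≠ 0 ∧ R < 1 * Real.log ‖γ‖ := by
      intro R
      obtain ⟨w, hwS, hwn⟩ := hb (Real.exp R + 1)
      obtain ⟨u, hu, hud⟩ := Metric.mem_closure_iff.mp hwS.1 1 one_pos
      obtain ⟨γ, hγΓ, z, hz, rfl⟩ := hu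
      have hγn : ‖γ * z‖ = ‖γ‖ := by rw [norm_mul, hz, mul_one]
      rw [dist_eq_norm] at hud
      have h10 : ‖w‖ - ‖γ * z‖ ≤ ‖w - γ * z‖ := norm_sub_norm_le _ _
      have hγR : Real.exp R < ‖γ‖ := by rw [← hγn]; linarith
      have hγpos : 0 < ‖γ‖ := lt_trans (Real.exp_pos R) hγR
      refine ⟨γ, hγΓ, norm_pos_iff.mp hγpos, ?_⟩
      rw [one_mul]
      exact (Real.lt_log_iff_exp_lt hγpos).mpr hγR
    obtain ⟨l, hld, hnd⟩ := shs_construct_ab Γ 1 (Or.inl rfl) hdiv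
    exact hnd (key l (by rw [hld.closure_eq, interior_univ]; exact univ_nonempty))
  · by_contra hb
    push_neg at hb
    have hdiv : ∀ R : ℝ, ∃ γ ∈ Γ, γ ≠ 0 ∧ R < (-1) * Real.log ‖γ‖ := by
      intro R
      obtain ⟨w, hwS, hwn⟩ := hb (Real.exp (-R) / 2) (by positivity)
      have hw0 : w ≠ 0 := by simpa using hwS.2
      have hwpos : 0 < ‖w‖ := norm_pos_iff.mpr hw0
      obtain ⟨u, hu, hud⟩ := Metric.mem_closure_iff.mp hwS.1 (‖w‖/2) (by positivity)
      obtain ⟨γ, hγΓ, z, hz, rfl⟩ := hu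
      have hγn : ‖γ * z‖ = ‖γ‖ := by rw [norm_mul, hz, mul_one]
      rw [dist_eq_norm] at hud
      have h10 : ‖w‖ - ‖γ * z‖ ≤ ‖w - γ * z‖ := norm_sub_norm_le _ _
      have h11 : ‖γ * z‖ - ‖w‖ ≤ ‖w - γ * z‖ := by
        have h12 := norm_sub_norm_le (γ * z) w
        rwa [norm_sub_rev] at h12
      have hγpos : 0 < ‖γ‖ := by rw [← hγn]; linarith
      have hγsmall : ‖γ‖ < Real.exp (-R) := by
        rw [← hγn]
        have := Real.exp_pos (-R)
        linarith
      refine ⟨γ, hγΓ, norm_pos_iff.mp hγpos, ?_⟩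
      have h13 := Real.log_lt_log hγpos hγsmall
      rw [Real.log_exp] at h13
      linarith
    obtain ⟨l, hld, hnd⟩ := shs_construct_ab Γ (-1) (Or.inr rfl) hdiv
    exact hnd (key l (by rw [hld.closure_eq, interior_univ]; exact univ_nonempty))
  · by_contra hb
    rw [← ne_eq, ← nonempty_iff_ne_empty] at hb
    obtain ⟨w0, hw0⟩ := hb
    obtain ⟨δ', hδ', hball'⟩ := Metric.isOpen_iff.mp isOpen_interior w0 hw0
    have hsub : ball w0 (2*(δ'/4)) ⊆
        closure {w : ℂ | ∃ γ ∈ Γ, ∃ z : ℂ, ‖z‖ = 1 ∧ w = γ * z} \ {0} := by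
      intro x hx
      apply interior_subset
      apply hball'
      rw [mem_ball] at hx ⊢
      linarith
    have hb1 : ball w0 (2*(δ'/4)) ⊆
        closure {w : ℂ | ∃ γ ∈ Γ, ∃ z : ℂ, ‖z‖ = 1 ∧ w = γ * z} :=
      fun x hx => (hsub hx).1
    have hb0 : (0:ℂ) ∉ ball w0 (2*(δ'/4)) := fun h => by simpa using (hsub h).2
    obtain ⟨l, hint, hnd⟩ := shs_construct_c Γ w0 (δ'/4) (by positivity) hb1 hb0
    exact hnd (key l hint)

end SHS
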